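/- arXiv:2103.07816 — 3 statements merged into one kernel-verified Lean document; each statement's English description precedes it below -/
import Mathlib

section
/- Suppose the coupled Riccati equations hold: $2k^2 t R_n'(t) = 2[k^2(n+\alpha+1)+t]R_n - 2r_n(2n+2\alpha+1+R_n) + k^2 R_n^2 + 2(2n+2\alpha+1)t$ and $2k^2 t r_n'(t) = 2[k^2(n+\alpha+1)+t]r_n - \frac{2(2n+2\alpha+1)(r_n^2-2tr_n)}{R_n} - r_n^2 - 2k^2 n t$, with $R_n(t) \neq 0$, $2n+2\alpha+1+R_n(t) \neq 0$, $k \neq 0$, $t > 0$. Then, solving the first equation for $r_n$ and substituting into the second, $R_n$ satisfies: $8k^4 t^2 R_n(2n+2\alpha+1+R_n)R_n'' - 4k^4 t^2(4n+4\alpha+2+3R_n)(R_n')^2 + 8k^4 t R_n(2n+2\alpha+1+R_n)R_n' - k^4 R_n^5 - 2k^4(2n+2\alpha+1)R_n^4 - 4[k^4(n+\alpha)(n+\alpha+1) - t^2 - 2k^2\alpha t]R_n^3 + 16t(2n+2\alpha+1)(t+k^2\alpha)R_n^2 + 4t(2n+2\alpha+1)^2(5t+2k^2\alpha)R_n + 8t^2(2n+2\alpha+1)^3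 = 0$. -/
set_option maxRecDepth 8000
set_option maxHeartbeats 1000000

lemma stmt_8_alg (k t α A A1 A2 rr rr1 : ℝ) (n : ℕ) (hA : A ≠ 0)
    (hP : rr * (2 * (2 * n + 2 * α + 1 + A)) =
        2 * (k ^ 2 * (n + α + 1) + t) * A + k ^ 2 * A ^ 2 +
          2 * (2 * n + 2 * α + 1) * t - 2 * k ^ 2 * t * A1)
    (hQ : rr1 * (2 * (2 * n + 2 * α + 1 + A)) ^ 2 =
        (2 * (k ^ 2 * (n + α + 1) + t) * A1 + 2 * A + k ^ 2 * (2 * A * A1) +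
          2 * (2 * n + 2 * α + 1) - (2 * k ^ 2 * A1 + 2 * k ^ 2 * t * A2)) *
          (2 * (2 * n + 2 * α + 1 + A)) -
        (2 * (k ^ 2 * (n + α + 1) + t) * A + k ^ 2 * A ^ 2 +
          2 * (2 * n + 2 * α + 1) * t - 2 * k ^ 2 * t * A1) * (2 * A1))
    (h2 : 2 * k ^ 2 * t * rr1 =
        2 * (k ^ 2 * (n + α + 1) + t) * rr -
          2 * (2 * n + 2 * α + 1) * (rr ^ 2 - 2 * t * rr) / A -
          rr ^ 2 - 2 * k ^ 2 * n * t) :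
    8 * k ^ 4 * t ^ 2 * A * (2 * n + 2 * α + 1 + A) * A2 -
        4 * k ^ 4 * t ^ 2 * (4 * n + 4 * α + 2 + 3 * A) * A1 ^ 2 +
        8 * k ^ 4 * t * A * (2 * n + 2 * α + 1 + A) * A1 -
        k ^ 4 * A ^ 5 - 2 * k ^ 4 * (2 * n + 2 * α + 1) * A ^ 4 -
        4 * (k ^ 4 * (n + α) * (n + α + 1) - t ^ 2 - 2 * k ^ 2 * α * t) * A ^ 3 +
        16 * t * (2 * n + 2 * α + 1) * (t + k ^ 2 * α) * A ^ 2 +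
        4 * t * (2 * n + 2 * α + 1) ^ 2 * (5 * t + 2 * k ^ 2 * α) * A +
        8 * t ^ 2 * (2 * n + 2 * α + 1) ^ 3 = 0 := by
  have h2A : 2 * k ^ 2 * t * rr1 * A =
      2 * (k ^ 2 * (n + α + 1) + t) * rr * A -
        2 * (2 * n + 2 * α + 1) * (rr ^ 2 - 2 * t * rr) -
        rr ^ 2 * A - 2 * k ^ 2 * n * t * A := by
    field_simp at h2
    linear_combination h2
  linear_combination
    (-((2 * (2 * (n:ℝ) + 2 * α + 1 + A)) ^ 2)) * h2A +
    (2 * k ^ 2 * t * A) * hQ +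
    (-(2 * (k ^ 2 * ((n:ℝ) + α + 1) + t) * A + 4 * t * (2 * n + 2 * α + 1)) *
        (2 * (2 * (n:ℝ) + 2 * α + 1 + A)) +
      (2 * (2 * (n:ℝ) + 2 * α + 1) + A) *
        (rr * (2 * (2 * (n:ℝ) + 2 * α + 1 + A)) +
          (2 * (k ^ 2 * ((n:ℝ) + α + 1) + t) * A + k ^ 2 * A ^ 2 +
            2 * (2 * n + 2 * α + 1) * t - 2 * k ^ 2 * t * A1))) * hP

theorem stmt_8 (R R' R'' r r' : ℝ → ℝ) (k α : ℝ) (n : ℕ)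
    (hk : k ≠ 0) (hα : 0 < α)
    (hRd : ∀ t : ℝ, 0 < t → HasDerivAt R (R' t) t)
    (hRd2 : ∀ t : ℝ, 0 < t → HasDerivAt R' (R'' t) t)
    (hrd : ∀ t : ℝ, 0 < t → HasDerivAt r (r' t) t)
    (hRne : ∀ t : ℝ, 0 < t → R t ≠ 0)
    (hden : ∀ t : ℝ, 0 < t → 2 * n + 2 * α + 1 + R t ≠ 0)
    (hric1 : ∀ t : ℝ, 0 < t →
      2 * k ^ 2 * t * R' t =
        2 * (k ^ 2 * (n + α + 1) + t) * R t - 2 * r t * (2 * n + 2 * α + 1 + R t) +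
          k ^ 2 * (R t) ^ 2 + 2 * (2 * n + 2 * α + 1) * t)
    (hric2 : ∀ t : ℝ, 0 < t →
      2 * k ^ 2 * t * r' t =
        2 * (k ^ 2 * (n + α + 1) + t) * r t -
          2 * (2 * n + 2 * α + 1) * ((r t) ^ 2 - 2 * t * r t) / R t -
          (r t) ^ 2 - 2 * k ^ 2 * n * t)
    (hrsol : ∀ t : ℝ, 0 < t →
      r t = (2 * (k ^ 2 * (n + α + 1) + t) * R t + k ^ 2 * (R t) ^ 2 +
              2 * (2 * n + 2 * α + 1) * t - 2 * k ^ 2 * t * R' t) /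
            (2 * (2 * n + 2 * α + 1 + R t))) :
    ∀ t : ℝ, 0 < t →
      8 * k ^ 4 * t ^ 2 * R t * (2 * n + 2 * α + 1 + R t) * R'' t -
        4 * k ^ 4 * t ^ 2 * (4 * n + 4 * α + 2 + 3 * R t) * (R' t) ^ 2 +
        8 * k ^ 4 * t * R t * (2 * n + 2 * α + 1 + R t) * R' t -
        k ^ 4 * (R t) ^ 5 - 2 * k ^ 4 * (2 * n + 2 * α + 1) * (R t) ^ 4 -
        4 * (k ^ 4 * (n + α) * (n + α + 1) - t ^ 2 - 2 * k ^ 2 * α * t) * (R t) ^ 3 +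
        16 * t * (2 * n + 2 * α + 1) * (t + k ^ 2 * α) * (R t) ^ 2 +
        4 * t * (2 * n + 2 * α + 1) ^ 2 * (5 * t + 2 * k ^ 2 * α) * R t +
        8 * t ^ 2 * (2 * n + 2 * α + 1) ^ 3 = 0 := by
  intro t ht
  have h1 := hRd t ht
  have h2 := hRd2 t ht
  have hD : (2 : ℝ) * (2 * n + 2 * α + 1 + R t) ≠ 0 :=
    mul_ne_zero two_ne_zero (hden t ht)
  have hP : r t * (2 * (2 * n + 2 * α + 1 + R t)) =
      2 * (k ^ 2 * (n + α + 1) + t) * R t + k ^ 2 * (R t) ^ 2 +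
        2 * (2 * n + 2 * α + 1) * t - 2 * k ^ 2 * t * R' t := by
    rw [hrsol t ht, div_mul_cancel₀ _ hD]
  have hnum : HasDerivAt
      (fun s : ℝ => 2 * (k ^ 2 * (n + α + 1) + s) * R s + k ^ 2 * (R s) ^ 2 +
        2 * (2 * n + 2 * α + 1) * s - 2 * k ^ 2 * s * R' s)
      (2 * (k ^ 2 * (n + α + 1) + t) * R' t + 2 * R t + k ^ 2 * (2 * R t * R' t) +
        2 * (2 * n + 2 * α + 1) - (2 * k ^ 2 * R' t + 2 * k ^ 2 * t * R'' t)) t := by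
    have ha : HasDerivAt (fun s : ℝ => 2 * (k ^ 2 * ((n : ℝ) + α + 1) + s) * R s)
        (2 * 1 * R t + 2 * (k ^ 2 * ((n : ℝ) + α + 1) + t) * R' t) t :=
      (((hasDerivAt_id t).const_add (k ^ 2 * ((n : ℝ) + α + 1))).const_mul 2).mul h1
    have hb : HasDerivAt (fun s : ℝ => k ^ 2 * (R s) ^ 2)
        (k ^ 2 * ((2 : ℕ) * (R t) ^ 1 * R' t)) t := (h1.pow 2).const_mul (k ^ 2)
    have hc : HasDerivAt (fun s : ℝ => 2 * (2 * (n : ℝ) + 2 * α + 1) * s)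
        (2 * (2 * (n : ℝ) + 2 * α + 1) * 1) t :=
      (hasDerivAt_id t).const_mul (2 * (2 * (n : ℝ) + 2 * α + 1))
    have hd : HasDerivAt (fun s : ℝ => 2 * k ^ 2 * s * R' s)
        (2 * k ^ 2 * 1 * R' t + 2 * k ^ 2 * t * R'' t) t :=
      ((hasDerivAt_id t).const_mul (2 * k ^ 2)).mul h2
    refine (((ha.add hb).add hc).sub hd).congr_deriv ?_
    push_cast
    ring
  have hdenD : HasDerivAt (fun s : ℝ => 2 * (2 * (n : ℝ) + 2 * α + 1 + R s))
      (2 * R' t) t := by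
    simpa using (h1.const_add (2 * (n : ℝ) + 2 * α + 1)).const_mul 2
  have hF := hnum.div hdenD hD
  have heq : r =ᶠ[nhds t] (fun s : ℝ =>
      (2 * (k ^ 2 * (n + α + 1) + s) * R s + k ^ 2 * (R s) ^ 2 +
        2 * (2 * n + 2 * α + 1) * s - 2 * k ^ 2 * s * R' s) /
      (2 * (2 * n + 2 * α + 1 + R s))) :=
    Filter.eventuallyEq_of_mem (isOpen_Ioi.mem_nhds ht) (fun s hs => hrsol s hs)
  have huniq := (hrd t ht).unique (hF.congr_of_eventuallyEq heq)
  have hQ : r' t * (2 * (2 * n + 2 * α + 1 + R t)) ^ 2 =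
      (2 * (k ^ 2 * (n + α + 1) + t) * R' t + 2 * R t + k ^ 2 * (2 * R t * R' t) +
        2 * (2 * n + 2 * α + 1) - (2 * k ^ 2 * R' t + 2 * k ^ 2 * t * R'' t)) *
        (2 * (2 * n + 2 * α + 1 + R t)) -
      (2 * (k ^ 2 * (n + α + 1) + t) * R t + k ^ 2 * (R t) ^ 2 +
        2 * (2 * n + 2 * α + 1) * t - 2 * k ^ 2 * t * R' t) * (2 * R' t) := by
    rw [huniq, div_mul_cancel₀ _ (pow_ne_zero 2 hD)]
  exact stmt_8_alg k t α (R t) (R' t) (R'' t) (r t) (r' t) n (hRne t ht) hP hQ (hric2 t ht)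
end

section
/- Let $R : (0,\infty) \to \mathbb{R}$ be twice differentiable satisfying $8k^4 t^2 R(2c+R)R'' - 4k^4 t^2(4c+3R)(R')^2 + 8k^4 t R(2c+R)R' - k^4 R^5 - 2k^4(2c)R^4 - 4[k^4(c-\tfrac12)(c+\tfrac12) - t^2 - 2k^2\alpha t]R^3 + 16t(2c)(t+k^2\alpha)R^2 + 4t(2c)^2(5t+2k^2\alpha)R + 8t^2(2c)^3 = 0$ where $c = n+\alpha+\tfrac12$ and $2c = 2n+2\alpha+1$. Define $\Phi(t) = \frac{R(t)+2c}{2c}$. Assume $\Phi(t) \neq 0$, $\Phi(t) \neq 1$, $k \neq 0$, $2c \neq 0$ on the domain. Then $\Phi$ satisfies the Painlevé V equation $\Phi'' = \frac{(3\Phi-1)(\Phi')^2}{2\Phi(\Phi-1)} - \frac{\Phi'}{t} + \frac{(\Phi-1)^2}{t^2}\left(\gamma\Phi + \frac{\delta}{\Phi}\right) + \frac{\varepsilon\Phi}{t} + \frac{\eta\Phi(\Phi+1)}{\Phi-1}$ with $\gamma = \frac{(2n+2\alpha+1)^2}{8}$, $\delta = -\frac18$, $\varepsilon = -\frac{\alpha}{k^2}$,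 $\eta = -\frac{1}{2k^4}$. -/
theorem stmt_9 (R R' R'' : ℝ → ℝ) (k α : ℝ) (n : ℕ)
    (hk : k ≠ 0) (hα : 0 < α)
    (c : ℝ) (hc : c = (n : ℝ) + α + 1 / 2) (hcne : 2 * c ≠ 0)
    (hRd : ∀ t : ℝ, 0 < t → HasDerivAt R (R' t) t)
    (hRd2 : ∀ t : ℝ, 0 < t → HasDerivAt R' (R'' t) t)
    (hode : ∀ t : ℝ, 0 < t →
      8 * k ^ 4 * t ^ 2 * R t * (2 * c + R t) * R'' t -
        4 * k ^ 4 * t ^ 2 * (4 * c + 3 * R t) * (R' t) ^ 2 +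
        8 * k ^ 4 * t * R t * (2 * c + R t) * R' t -
        k ^ 4 * (R t) ^ 5 - 2 * k ^ 4 * (2 * c) * (R t) ^ 4 -
        4 * (k ^ 4 * (c - 1 / 2) * (c + 1 / 2) - t ^ 2 - 2 * k ^ 2 * α * t) * (R t) ^ 3 +
        16 * t * (2 * c) * (t + k ^ 2 * α) * (R t) ^ 2 +
        4 * t * (2 * c) ^ 2 * (5 * t + 2 * k ^ 2 * α) * R t +
        8 * t ^ 2 * (2 * c) ^ 3 = 0)
    (Φ Φ' Φ'' : ℝ → ℝ)
    (hΦ : ∀ t : ℝ, Φ t = (R t + 2 * c) / (2 * c))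
    (hΦ' : ∀ t : ℝ, Φ' t = R' t / (2 * c))
    (hΦ'' : ∀ t : ℝ, Φ'' t = R'' t / (2 * c))
    (hΦ0 : ∀ t : ℝ, 0 < t → Φ t ≠ 0)
    (hΦ1 : ∀ t : ℝ, 0 < t → Φ t ≠ 1)
    (γ δ ε η : ℝ)
    (hγ : γ = (2 * (n : ℝ) + 2 * α + 1) ^ 2 / 8)
    (hδ : δ = -(1 / 8))
    (hε : ε = -(α / k ^ 2))
    (hη : η = -(1 / (2 * k ^ 4))) :
    ∀ t : ℝ, 0 < t →
      Φ'' t = (3 * Φ t - 1) * (Φ' t) ^ 2 / (2 * Φ t * (Φ t - 1)) - Φ' t / t +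
        (Φ t - 1) ^ 2 / t ^ 2 * (γ * Φ t + δ / Φ t) + ε * Φ t / t +
        η * Φ t * (Φ t + 1) / (Φ t - 1) := by
  intro t ht
  have ht0 : t ≠ 0 := ne_of_gt ht
  have hp : Φ t ≠ 0 := hΦ0 t ht
  have hp1 : Φ t - 1 ≠ 0 := sub_ne_zero.mpr (hΦ1 t ht)
  have hR : R t = 2 * c * Φ t - 2 * c := by
    have := hΦ t
    rw [eq_div_iff hcne] at this
    linarith [this]
  have hR' : R' t = 2 * c * Φ' t := by
    have := hΦ' t
    rw [eq_div_iff hcne] at this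
    linarith [this]
  have hR'' : R'' t = 2 * c * Φ'' t := by
    have := hΦ'' t
    rw [eq_div_iff hcne] at this
    linarith [this]
  have h := hode t ht
  rw [hR, hR', hR''] at h
  have key : 8 * k ^ 4 * t ^ 2 * Φ t * (Φ t - 1) * Φ'' t
      - 4 * k ^ 4 * t ^ 2 * (3 * Φ t - 1) * (Φ' t) ^ 2
      + 8 * k ^ 4 * t * Φ t * (Φ t - 1) * Φ' t
      - k ^ 4 * (2 * c) ^ 2 * (Φ t) ^ 2 * (Φ t - 1) ^ 3
      + k ^ 4 * (Φ t - 1) ^ 3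
      + 4 * t ^ 2 * (Φ t) ^ 2 * (Φ t + 1)
      + 8 * k ^ 2 * α * t * (Φ t) ^ 2 * (Φ t - 1) = 0 := by
    have hc3 : (2 * c) ^ 3 ≠ 0 := pow_ne_zero 3 hcne
    have h8 : (2 * c) ^ 3 * (8 * k ^ 4 * t ^ 2 * Φ t * (Φ t - 1) * Φ'' t
        - 4 * k ^ 4 * t ^ 2 * (3 * Φ t - 1) * (Φ' t) ^ 2
        + 8 * k ^ 4 * t * Φ t * (Φ t - 1) * Φ' t
        - k ^ 4 * (2 * c) ^ 2 * (Φ t) ^ 2 * (Φ t - 1) ^ 3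
        + k ^ 4 * (Φ t - 1) ^ 3
        + 4 * t ^ 2 * (Φ t) ^ 2 * (Φ t + 1)
        + 8 * k ^ 2 * α * t * (Φ t) ^ 2 * (Φ t - 1)) = 0 := by
      linear_combination h
    exact (mul_eq_zero.mp h8).resolve_left hc3
  have hk4 : k ^ 4 ≠ 0 := pow_ne_zero 4 hk
  have hden : 8 * k ^ 4 * t ^ 2 * Φ t * (Φ t - 1) ≠ 0 := by
    simp only [ne_eq, mul_eq_zero, not_or]
    refine ⟨⟨⟨⟨by norm_num, hk4⟩, pow_ne_zero 2 ht0⟩, hp⟩, hp1⟩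
  have hΦ''eq : Φ'' t =
      (4 * k ^ 4 * t ^ 2 * (3 * Φ t - 1) * (Φ' t) ^ 2
        - 8 * k ^ 4 * t * Φ t * (Φ t - 1) * Φ' t
        + k ^ 4 * (2 * c) ^ 2 * (Φ t) ^ 2 * (Φ t - 1) ^ 3
        - k ^ 4 * (Φ t - 1) ^ 3
        - 4 * t ^ 2 * (Φ t) ^ 2 * (Φ t + 1)
        - 8 * k ^ 2 * α * t * (Φ t) ^ 2 * (Φ t - 1))
      / (8 * k ^ 4 * t ^ 2 * Φ t * (Φ t - 1)) := by
    rw [eq_div_iff hden]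
    linear_combination key
  have hCγ : γ = (2 * c) ^ 2 / 8 := by rw [hγ, hc]; ring
  rw [hΦ''eq, hCγ, hδ, hε, hη]
  have hk2 : k ^ 2 ≠ 0 := pow_ne_zero 2 hk
  field_simp
  ring
end

section
/- Suppose $2t\beta_n' = \frac{r_n^2 - 2tr_n}{k^2 R_n} - \beta_n R_n$ where $\beta_n$ is given by $\beta_n = \frac{2k^2(n+\alpha)r_n - 2k^2tn + 2tr_n - r_n^2}{k^2R_n(2n+2\alpha-1)} - \frac{(2n+2\alpha+1)(r_n^2 - 2tr_n)}{k^2R_n^2(2n+2\alpha-1)}$, and $r_n$ satisfies the Riccati equation $2k^2 t r_n' = 2[k^2(n+\alpha+1)+t]r_n - \frac{2(2n+2\alpha+1)(r_n^2-2tr_n)}{R_n} - r_n^2 - 2k^2nt$. If the factor $2(2n+2\alpha+1)(2t-r_n)r_n + (2tr_n + 2k^2nr_n + 2k^2\alpha r_n - r_n^2 - 2k^2nt)R_n$ is nonzero at some $t_0$, and $k \neq 0$, $R_n(t_0) \neq 0$, $2n+2\alpha-1 \neq 0$, then at $t_0$: $2k^2tR_n' = 2[k^2(n+\alpha+1)+t]R_n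 - 2r_n(2n+2\alpha+1+R_n) + k^2R_n^2 + 2(2n+2\alpha+1)t$. -/
theorem stmt_14 (r r' R R' β β' : ℝ → ℝ) (k α : ℝ) (n : ℕ) (t₀ : ℝ)
    (hk : k ≠ 0) (hα : 0 < α) (ht₀ : 0 < t₀)
    (hrd : ∀ t : ℝ, 0 < t → HasDerivAt r (r' t) t)
    (hRd : ∀ t : ℝ, 0 < t → HasDerivAt R (R' t) t)
    (hβd : ∀ t : ℝ, 0 < t → HasDerivAt β (β' t) t)
    (hβ : ∀ t : ℝ, 0 < t →
      β t = (2 * k ^ 2 * (n + α) * r t - 2 * k ^ 2 * t * n + 2 * t * r t - (r t) ^ 2) /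
              (k ^ 2 * R t * (2 * n + 2 * α - 1)) -
            (2 * n + 2 * α + 1) * ((r t) ^ 2 - 2 * t * r t) /
              (k ^ 2 * (R t) ^ 2 * (2 * n + 2 * α - 1)))
    (hβ' : ∀ t : ℝ, 0 < t →
      2 * t * β' t = ((r t) ^ 2 - 2 * t * r t) / (k ^ 2 * R t) - β t * R t)
    (hric : ∀ t : ℝ, 0 < t →
      2 * k ^ 2 * t * r' t =
        2 * (k ^ 2 * (n + α + 1) + t) * r t -
          2 * (2 * n + 2 * α + 1) * ((r t) ^ 2 - 2 * t * r t) / R t -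
          (r t) ^ 2 - 2 * k ^ 2 * n * t)
    (hfac : 2 * (2 * n + 2 * α + 1) * (2 * t₀ - r t₀) * r t₀ +
      (2 * t₀ * r t₀ + 2 * k ^ 2 * n * r t₀ + 2 * k ^ 2 * α * r t₀ -
        (r t₀) ^ 2 - 2 * k ^ 2 * n * t₀) * R t₀ ≠ 0)
    (hRne : R t₀ ≠ 0) (hden : 2 * (n : ℝ) + 2 * α - 1 ≠ 0) :
    2 * k ^ 2 * t₀ * R' t₀ =
      2 * (k ^ 2 * (n + α + 1) + t₀) * R t₀ -
        2 * r t₀ * (2 * n + 2 * α + 1 + R t₀) +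
        k ^ 2 * (R t₀) ^ 2 + 2 * (2 * n + 2 * α + 1) * t₀ := by
  have hr := hrd t₀ ht₀
  have hR := hRd t₀ ht₀
  have hb := hβd t₀ ht₀
  have hk2 : k ^ 2 ≠ 0 := pow_ne_zero 2 hk
  -- eventual equality: cleared β-definition
  have hRev : ∀ᶠ t in nhds t₀, R t ≠ 0 := hR.continuousAt.eventually_ne hRne
  have hpos : ∀ᶠ t in nhds t₀, 0 < t := eventually_gt_nhds ht₀
  have hev : (fun t => k ^ 2 * (2 * (n:ℝ) + 2 * α - 1) * ((R t) ^ 2 * β t) -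
      (2 * k ^ 2 * ((n:ℝ) + α) * r t - 2 * k ^ 2 * t * (n:ℝ) + 2 * t * r t - (r t) ^ 2) * R t +
      (2 * (n:ℝ) + 2 * α + 1) * ((r t) ^ 2 - 2 * t * r t)) =ᶠ[nhds t₀] fun _ => (0:ℝ) := by
    filter_upwards [hRev, hpos] with t hRt ht
    rw [hβ t ht]
    field_simp [show 2 * ((n:ℝ) + α) - 1 ≠ 0 by intro h; apply hden; linarith]
    ring
  -- derivatives of components
  have h1 : HasDerivAt (fun t => (R t) ^ 2) (2 * R t₀ * R' t₀) t₀ := by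
    simpa using hR.fun_pow 2
  have h2 : HasDerivAt (fun t => (R t) ^ 2 * β t)
      (2 * R t₀ * R' t₀ * β t₀ + (R t₀) ^ 2 * β' t₀) t₀ := h1.mul hb
  have h3 : HasDerivAt (fun t => (r t) ^ 2) (2 * r t₀ * r' t₀) t₀ := by
    simpa using hr.fun_pow 2
  have h4 : HasDerivAt (fun t => t * r t) (r t₀ + t₀ * r' t₀) t₀ := by
    simpa using (hasDerivAt_id t₀).fun_mul hr
  have h5 : HasDerivAt (fun t : ℝ => t) 1 t₀ := hasDerivAt_id t₀
  have hN1 : HasDerivAt (fun t => 2 * k ^ 2 * ((n:ℝ) + α) * (r t) - 2 * k ^ 2 * (n:ℝ) * t +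
      2 * (t * r t) - (r t) ^ 2)
      (2 * k ^ 2 * ((n:ℝ) + α) * r' t₀ - 2 * k ^ 2 * (n:ℝ) * 1 +
        2 * (r t₀ + t₀ * r' t₀) - 2 * r t₀ * r' t₀) t₀ :=
    ((((hr.const_mul (2 * k ^ 2 * ((n:ℝ) + α))).sub
      (h5.const_mul (2 * k ^ 2 * (n:ℝ)))).add (h4.const_mul 2)).sub h3)
  have hN2 : HasDerivAt (fun t => (r t) ^ 2 - 2 * (t * r t))
      (2 * r t₀ * r' t₀ - 2 * (r t₀ + t₀ * r' t₀)) t₀ := h3.sub (h4.const_mul 2)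
  have hFD' := ((h2.const_mul (k ^ 2 * (2 * (n:ℝ) + 2 * α - 1))).sub (hN1.mul hR)).add
      (hN2.const_mul (2 * (n:ℝ) + 2 * α + 1))
  have hFD : HasDerivAt (fun t => k ^ 2 * (2 * (n:ℝ) + 2 * α - 1) * ((R t) ^ 2 * β t) -
      (2 * k ^ 2 * ((n:ℝ) + α) * r t - 2 * k ^ 2 * t * (n:ℝ) + 2 * t * r t - (r t) ^ 2) * R t +
      (2 * (n:ℝ) + 2 * α + 1) * ((r t) ^ 2 - 2 * t * r t))
      (k ^ 2 * (2 * (n:ℝ) + 2 * α - 1) * (2 * R t₀ * R' t₀ * β t₀ + (R t₀) ^ 2 * β' t₀) -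
        ((2 * k ^ 2 * ((n:ℝ) + α) * r' t₀ - 2 * k ^ 2 * (n:ℝ) + 2 * r t₀ + 2 * t₀ * r' t₀ -
          2 * r t₀ * r' t₀) * R t₀ +
          (2 * k ^ 2 * ((n:ℝ) + α) * r t₀ - 2 * k ^ 2 * t₀ * (n:ℝ) + 2 * t₀ * r t₀ -
            (r t₀) ^ 2) * R' t₀) +
        (2 * (n:ℝ) + 2 * α + 1) * (2 * r t₀ * r' t₀ - 2 * r t₀ - 2 * t₀ * r' t₀)) t₀ := by
    have step1 : HasDerivAt (fun t => k ^ 2 * (2 * (n:ℝ) + 2 * α - 1) * ((R t) ^ 2 * β t) -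
        (2 * k ^ 2 * ((n:ℝ) + α) * (r t) - 2 * k ^ 2 * (n:ℝ) * t + 2 * (t * r t) -
          (r t) ^ 2) * R t + (2 * (n:ℝ) + 2 * α + 1) * ((r t) ^ 2 - 2 * (t * r t)))
        (k ^ 2 * (2 * (n:ℝ) + 2 * α - 1) * (2 * R t₀ * R' t₀ * β t₀ + (R t₀) ^ 2 * β' t₀) -
          ((2 * k ^ 2 * ((n:ℝ) + α) * r' t₀ - 2 * k ^ 2 * (n:ℝ) + 2 * r t₀ + 2 * t₀ * r' t₀ -
            2 * r t₀ * r' t₀) * R t₀ +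
            (2 * k ^ 2 * ((n:ℝ) + α) * r t₀ - 2 * k ^ 2 * t₀ * (n:ℝ) + 2 * t₀ * r t₀ -
              (r t₀) ^ 2) * R' t₀) +
          (2 * (n:ℝ) + 2 * α + 1) * (2 * r t₀ * r' t₀ - 2 * r t₀ - 2 * t₀ * r' t₀)) t₀ := by
      exact hFD'.congr_deriv (by ring)
    exact step1.congr_of_eventuallyEq (Filter.Eventually.of_forall fun x => by ring)
  have hF0 : HasDerivAt (fun t => k ^ 2 * (2 * (n:ℝ) + 2 * α - 1) * ((R t) ^ 2 * β t) -
      (2 * k ^ 2 * ((n:ℝ) + α) * r t - 2 * k ^ 2 * t * (n:ℝ) + 2 * t * r t - (r t) ^ 2) * R t +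
      (2 * (n:ℝ) + 2 * α + 1) * ((r t) ^ 2 - 2 * t * r t)) 0 t₀ :=
    (hasDerivAt_const t₀ (0:ℝ)).congr_of_eventuallyEq hev
  have E1 := hFD.unique hF0
  -- cleared equations at t₀
  have c2 : k ^ 2 * (R t₀) ^ 2 * (2 * (n:ℝ) + 2 * α - 1) * β t₀ =
      (2 * k ^ 2 * ((n:ℝ) + α) * r t₀ - 2 * k ^ 2 * t₀ * (n:ℝ) + 2 * t₀ * r t₀ -
        (r t₀) ^ 2) * R t₀ -
      (2 * (n:ℝ) + 2 * α + 1) * ((r t₀) ^ 2 - 2 * t₀ * r t₀) := by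
    rw [hβ t₀ ht₀]
    field_simp [show 2 * ((n:ℝ) + α) - 1 ≠ 0 by intro h; apply hden; linarith]
  have c3 : 2 * t₀ * k ^ 2 * R t₀ * β' t₀ =
      ((r t₀) ^ 2 - 2 * t₀ * r t₀) - k ^ 2 * (R t₀) ^ 2 * β t₀ := by
    have h := hβ' t₀ ht₀
    field_simp at h
    linear_combination h
  have c4 : 2 * k ^ 2 * t₀ * r' t₀ * R t₀ =
      2 * (k ^ 2 * ((n:ℝ) + α + 1) + t₀) * r t₀ * R t₀ -
        2 * (2 * (n:ℝ) + 2 * α + 1) * ((r t₀) ^ 2 - 2 * t₀ * r t₀) -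
        (r t₀) ^ 2 * R t₀ - 2 * k ^ 2 * (n:ℝ) * t₀ * R t₀ := by
    have h := hric t₀ ht₀
    field_simp at h
    linear_combination h
  -- key linear combination
  have key : (2 * (2 * (n:ℝ) + 2 * α + 1) * (2 * t₀ - r t₀) * r t₀ +
      (2 * t₀ * r t₀ + 2 * k ^ 2 * (n:ℝ) * r t₀ + 2 * k ^ 2 * α * r t₀ -
        (r t₀) ^ 2 - 2 * k ^ 2 * (n:ℝ) * t₀) * R t₀) *
      (2 * k ^ 2 * t₀ * R' t₀ -
        (2 * (k ^ 2 * ((n:ℝ) + α + 1) + t₀) * R t₀ -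
          2 * r t₀ * (2 * (n:ℝ) + 2 * α + 1 + R t₀) +
          k ^ 2 * (R t₀) ^ 2 + 2 * (2 * (n:ℝ) + 2 * α + 1) * t₀)) = 0 := by
    linear_combination (2 * t₀ * k ^ 2 * R t₀) * E1 +
      (k ^ 2 * ((R t₀) ^ 2 - 4 * t₀ * R' t₀)) * c2 -
      (k ^ 2 * (R t₀) ^ 2 * (2 * (n:ℝ) + 2 * α - 1)) * c3 +
      ((2 * k ^ 2 * ((n:ℝ) + α) + 2 * t₀ - 2 * r t₀) * R t₀ -
        (2 * (n:ℝ) + 2 * α + 1) * (2 * r t₀ - 2 * t₀)) * c4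
  have := (mul_eq_zero.mp key).resolve_left hfac
  linarith [sub_eq_zero.mp this]
end
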